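/- arXiv:1909.04798 — 6 statements merged into one kernel-verified Lean document; each statement's English description precedes it below -/
import Mathlib

section
/- Let $g(z; x, a') = \frac{|z + a'|}{\sqrt{z^2 + x^2}}$ for real $z, x$ with $a' \ge 2h > 0$. Then $\sup_{z : |z| \ge h} g(z; x, a') \le \frac{a' + h}{\sqrt{h^2 + x^2}} \mathbb{1}(|x| \le \sqrt{a'h}) + \sqrt{\frac{a' + h}{h}}\, \mathbb{1}(|x| > \sqrt{a'h})$. -/
/-- Bound on `g(z; x, a') = |z + a'| / √(z² + x²)` over `|z| ≥ h`, for `a' ≥ 2h > 0`. -/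
theorem stmt_4 (h a' x : ℝ) (hh : 0 < h) (ha : 2 * h ≤ a')
    (z : ℝ) (hz : h ≤ |z|) :
    |z + a'| / Real.sqrt (z ^ 2 + x ^ 2) ≤
      (if |x| ≤ Real.sqrt (a' * h) then (a' + h) / Real.sqrt (h ^ 2 + x ^ 2)
       else Real.sqrt ((a' + h) / h)) := by
  have ha' : 0 < a' := by linarith
  have hz2 : h ^ 2 ≤ z ^ 2 := by nlinarith [sq_abs z, abs_nonneg z]
  have hpos : 0 < z ^ 2 + x ^ 2 := by nlinarith [sq_nonneg x]
  have key : |z + a'| / Real.sqrt (z ^ 2 + x ^ 2)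
      = Real.sqrt ((z + a') ^ 2 / (z ^ 2 + x ^ 2)) := by
    rw [Real.sqrt_div (sq_nonneg _), Real.sqrt_sq_eq_abs]
  rw [key]
  split_ifs with hx
  · have hx2 : x ^ 2 ≤ a' * h := by
      have h1 : |x| ^ 2 ≤ Real.sqrt (a' * h) ^ 2 :=
        pow_le_pow_left₀ (abs_nonneg x) hx 2
      rwa [Real.sq_sqrt (by positivity), sq_abs] at h1
    have hx2' : 0 < h ^ 2 + x ^ 2 := by positivity
    have hrhs : (a' + h) / Real.sqrt (h ^ 2 + x ^ 2)
        = Real.sqrt ((a' + h) ^ 2 / (h ^ 2 + x ^ 2)) := by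
      rw [Real.sqrt_div (sq_nonneg _), Real.sqrt_sq (by linarith)]
    rw [hrhs]
    apply Real.sqrt_le_sqrt
    rw [div_le_div_iff₀ hpos hx2']
    rcases le_abs.mp hz with h1 | h1
    · nlinarith [mul_nonneg (mul_nonneg (mul_nonneg ha'.le (by linarith : (0:ℝ) ≤ a' + h))
          (sub_nonneg.mpr h1)) (sub_nonneg.mpr h1),
        mul_nonneg (mul_nonneg (sub_nonneg.mpr h1) (by linarith : (0:ℝ) ≤ z + h))
          (sub_nonneg.mpr hx2),
        mul_nonneg (mul_nonneg ha'.le (sub_nonneg.mpr h1)) (sub_nonneg.mpr hx2)]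
    · -- z ≤ -h
      have hzneg : z ≤ -h := by linarith
      nlinarith [mul_nonneg (mul_nonneg (by linarith : (0:ℝ) ≤ h - z)
          (by linarith : (0:ℝ) ≤ -z - h)) (by nlinarith : (0:ℝ) ≤ a' ^ 2 - x ^ 2),
        mul_nonneg (mul_nonneg (by linarith : (0:ℝ) ≤ h - z) ha'.le)
          (by nlinarith [sq_nonneg x] : (0:ℝ) ≤ x ^ 2 - z * h)]
  · have hx2 : a' * h < x ^ 2 := by
      push_neg at hx
      have h1 : Real.sqrt (a' * h) ^ 2 < |x| ^ 2 :=
        pow_lt_pow_left₀ hx (Real.sqrt_nonneg _) (by norm_num)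
      rwa [Real.sq_sqrt (by positivity), sq_abs] at h1
    apply Real.sqrt_le_sqrt
    rw [div_le_div_iff₀ hpos hh]
    nlinarith [mul_nonneg ha'.le (sq_nonneg (z - h)),
      mul_nonneg (by linarith : (0:ℝ) ≤ a' + h) (by linarith : (0:ℝ) ≤ x ^ 2 - a' * h)]
end

section
/- Let $F(x) = x^2 e^x$ on $(0,\infty)$. Then $F^{-1}(x)$ is increasing in $x$, and $F^{-1}(x)/\sqrt{x}$ is decreasing in $x$. Moreover for any $x_0 \ge e$ and any $0 < x \le x_0$, $F^{-1}(x) \ge \sqrt{x/x_0}$, and for any $x > e$, $F^{-1}(x) \ge \log x - 2\log\log x$. -/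
private lemma F_mono {a b : ℝ} (ha : 0 < a) (hab : a < b) :
    a ^ 2 * Real.exp a < b ^ 2 * Real.exp b := by
  have h1 : a ^ 2 < b ^ 2 := by nlinarith
  have h2 : Real.exp a < Real.exp b := Real.exp_lt_exp.mpr hab
  nlinarith [Real.exp_pos a, sq_nonneg a]

private lemma F_le {x1 x2 y1 y2 : ℝ} (hy1 : 0 < y1) (hy2 : 0 < y2)
    (h1 : y1 ^ 2 * Real.exp y1 = x1) (h2 : y2 ^ 2 * Real.exp y2 = x2)
    (h : x1 ≤ x2) : y1 ≤ y2 := by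
  by_contra hc
  push_neg at hc
  have := F_mono hy2 hc
  rw [h1, h2] at this
  linarith

private lemma sqrt_F {y : ℝ} (hy : 0 < y) :
    Real.sqrt (y ^ 2 * Real.exp y) = y * Real.exp (y / 2) := by
  have : y ^ 2 * Real.exp y = (y * Real.exp (y / 2)) ^ 2 := by
    rw [mul_pow, sq (Real.exp _), ← Real.exp_add]
    ring_nf
  rw [this, Real.sqrt_sq (by positivity)]

/-- Properties of the inverse of `F(x) = x² eˣ` on `(0, ∞)`, expressed via the defining
relation `F y = x` with `y > 0`: `F⁻¹` is increasing, `F⁻¹(x)/√x` is decreasing,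
`F⁻¹(x) ≥ √(x/x₀)` for `x ≤ x₀` with `x₀ ≥ e`, and `F⁻¹(x) ≥ log x - 2 log log x` for `x > e`. -/
theorem stmt_7 :
    (∀ x1 x2 y1 y2 : ℝ, 0 < x1 → 0 < x2 → 0 < y1 → 0 < y2 →
      y1 ^ 2 * Real.exp y1 = x1 → y2 ^ 2 * Real.exp y2 = x2 → x1 ≤ x2 → y1 ≤ y2) ∧
    (∀ x1 x2 y1 y2 : ℝ, 0 < x1 → 0 < x2 → 0 < y1 → 0 < y2 →
      y1 ^ 2 * Real.exp y1 = x1 → y2 ^ 2 * Real.exp y2 = x2 → x1 ≤ x2 →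
      y2 / Real.sqrt x2 ≤ y1 / Real.sqrt x1) ∧
    (∀ x0 x y : ℝ, Real.exp 1 ≤ x0 → 0 < x → x ≤ x0 → 0 < y →
      y ^ 2 * Real.exp y = x → Real.sqrt (x / x0) ≤ y) ∧
    (∀ x y : ℝ, Real.exp 1 < x → 0 < y → y ^ 2 * Real.exp y = x →
      Real.log x - 2 * Real.log (Real.log x) ≤ y) := by
  refine ⟨fun x1 x2 y1 y2 _ _ hy1 hy2 h1 h2 h => F_le hy1 hy2 h1 h2 h, ?_, ?_, ?_⟩
  · intro x1 x2 y1 y2 hx1 hx2 hy1 hy2 h1 h2 h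
    have hy : y1 ≤ y2 := F_le hy1 hy2 h1 h2 h
    have e1 : Real.sqrt x1 = y1 * Real.exp (y1 / 2) := by rw [← h1, sqrt_F hy1]
    have e2 : Real.sqrt x2 = y2 * Real.exp (y2 / 2) := by rw [← h2, sqrt_F hy2]
    rw [e1, e2]
    have p1 := Real.exp_pos (y1 / 2)
    have p2 := Real.exp_pos (y2 / 2)
    rw [div_le_div_iff₀ (by positivity) (by positivity)]
    have : Real.exp (y1 / 2) ≤ Real.exp (y2 / 2) := Real.exp_le_exp.mpr (by linarith)
    nlinarith [mul_pos hy1 hy2]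
  · intro x0 x y he hx hxx0 hy hF
    have hx0 : 0 < x0 := lt_of_lt_of_le (Real.exp_pos 1) he
    have hey : Real.exp y ≤ x0 := by
      rcases le_or_gt y 1 with h | h
      · exact le_trans (Real.exp_le_exp.mpr h) he
      · have : Real.exp y ≤ y ^ 2 * Real.exp y := by
          have h2 : 1 * Real.exp y ≤ y ^ 2 * Real.exp y :=
            mul_le_mul_of_nonneg_right (by nlinarith) (Real.exp_pos y).le
          linarith
        linarith [hF ▸ this, hxx0]
    have hdiv : x / x0 ≤ y ^ 2 := by
      rw [div_le_iff₀ hx0, ← hF]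
      nlinarith [sq_nonneg y]
    calc Real.sqrt (x / x0) ≤ Real.sqrt (y ^ 2) := Real.sqrt_le_sqrt hdiv
      _ = y := Real.sqrt_sq hy.le
  · intro x y hex hy hF
    have hy1 : 1 < y := by
      by_contra hc
      push_neg at hc
      have : y ^ 2 * Real.exp y ≤ 1 ^ 2 * Real.exp 1 := by
        rcases eq_or_lt_of_le hc with h | h
        · rw [h]
        · exact (F_mono hy h).le
      rw [hF, one_pow, one_mul] at this
      linarith
    have hL : Real.log x = y + 2 * Real.log y := by
      rw [← hF, Real.log_mul (by positivity) (Real.exp_ne_zero y),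
        Real.log_pow, Real.log_exp]
      push_cast; ring
    have hlogy : 0 ≤ Real.log y := Real.log_nonneg hy1.le
    have hLy : y ≤ Real.log x := by rw [hL]; linarith
    have : Real.log y ≤ Real.log (Real.log x) :=
      Real.log_le_log (by linarith) hLy
    linarith [hL]
end

section
/- Let $X_1,\dots,X_n$ be independent Bernoulli random variables with $\mathbb{E}X_i = p_i$, let $w \in \mathbb{R}^n$ with $\|w\|_\infty = \max_i |w_i|$, and set $S_n = \sum_{i=1}^n w_i (X_i - p_i)$. Define $\Omega = \|w\|_\infty^2 / \sum_{i=1}^n p_i w_i^2$ and $F(x) = x^2 e^x$. Then for any $\delta \in (0,1)$, with probability at least $1 - \delta$, $S_n \le \frac{2\log(1/\delta)}{F^{-1}(2\Omega \log(1/\delta))}\|w\|_\infty$. -/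
open MeasureTheory ProbabilityTheory

set_option linter.unusedSectionVars false

lemma exp_quad_bound' {u v : ℝ} (h : |u| ≤ v) :
    Real.exp u - 1 - u ≤ u ^ 2 / 2 * Real.exp v := by
  have hv : 0 ≤ v := (abs_nonneg u).trans h
  rcases le_or_gt 0 u with hu | hu
  · have huv : u ≤ v := (le_abs_self u).trans h
    have h1 : Real.exp u - 1 - u = ∫ t in (0:ℝ)..u, (Real.exp t - 1) := by
      rw [intervalIntegral.integral_sub (Real.continuous_exp.intervalIntegrable _ _)
        (intervalIntegrable_const), integral_exp, intervalIntegral.integral_const]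
      simp
    have h2 : (∫ t in (0:ℝ)..u, (Real.exp t - 1)) ≤ ∫ t in (0:ℝ)..u, t * Real.exp v := by
      apply intervalIntegral.integral_mono_on hu
      · exact (Real.continuous_exp.sub continuous_const).intervalIntegrable _ _
      · exact (continuous_id.mul continuous_const).intervalIntegrable _ _
      · intro t ht
        have ht0 : 0 ≤ t := ht.1
        have htv : t ≤ v := ht.2.trans huv
        have : Real.exp t - 1 ≤ t * Real.exp t := by
          have h5 := Real.add_one_le_exp (-t)
          have h6 : Real.exp (-t) * Real.exp t = 1 := by
            rw [← Real.exp_add]; simp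
          nlinarith [Real.exp_pos t]
        calc Real.exp t - 1 ≤ t * Real.exp t := this
          _ ≤ t * Real.exp v := by
            exact mul_le_mul_of_nonneg_left (Real.exp_le_exp.2 htv) ht0
    have h3 : (∫ t in (0:ℝ)..u, t * Real.exp v) = u ^ 2 / 2 * Real.exp v := by
      rw [intervalIntegral.integral_mul_const, integral_id]
      ring
    linarith
  · have h1 : Real.exp u - 1 - u = ∫ t in u..(0:ℝ), (1 - Real.exp t) := by
      rw [intervalIntegral.integral_sub intervalIntegrable_const
        (Real.continuous_exp.intervalIntegrable _ _), integral_exp, intervalIntegral.integral_const]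
      simp; ring
    have h2 : (∫ t in u..(0:ℝ), (1 - Real.exp t)) ≤ ∫ t in u..(0:ℝ), -t := by
      apply intervalIntegral.integral_mono_on hu.le
      · exact (continuous_const.sub Real.continuous_exp).intervalIntegrable _ _
      · exact continuous_neg.intervalIntegrable _ _
      · intro t _
        have := Real.add_one_le_exp t
        linarith
    have h3 : (∫ t in u..(0:ℝ), -t) = u ^ 2 / 2 := by
      rw [intervalIntegral.integral_neg, integral_id]
      ring
    have h4 : (1:ℝ) ≤ Real.exp v := by
      rw [← Real.exp_zero]; exact Real.exp_le_exp.2 hv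
    nlinarith [sq_nonneg u]

section bernhelp
variable {Ω' : Type*} [MeasurableSpace Ω'] (μ : Measure Ω') [IsProbabilityMeasure μ]

lemma bern_repr' {Xi : Ω' → ℝ} (hv : ∀ ω, Xi ω = 0 ∨ Xi ω = 1) (f : ℝ → ℝ) :
    (fun ω => f (Xi ω))
      = fun ω => {ω | Xi ω = 1}.indicator (fun _ => f 1 - f 0) ω + f 0 := by
  funext ω
  rcases hv ω with h | h
  · rw [h, Set.indicator_of_notMem]
    · ring
    · simp [Set.mem_setOf_eq, h]
  · rw [h, Set.indicator_of_mem]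
    · ring
    · simp [Set.mem_setOf_eq, h]

lemma bern_integrable' {Xi : Ω' → ℝ} (hm : Measurable Xi) (hv : ∀ ω, Xi ω = 0 ∨ Xi ω = 1)
    (f : ℝ → ℝ) : Integrable (fun ω => f (Xi ω)) μ := by
  rw [bern_repr' hv f]
  exact (((integrable_const _).indicator (hm (measurableSet_singleton 1))).add
    (integrable_const _))

lemma bern_integral' {Xi : Ω' → ℝ} (hm : Measurable Xi) (hv : ∀ ω, Xi ω = 0 ∨ Xi ω = 1)
    (f : ℝ → ℝ) :
    ∫ ω, f (Xi ω) ∂μ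
      = (μ {ω | Xi ω = 1}).toReal * f 1 + (1 - (μ {ω | Xi ω = 1}).toReal) * f 0 := by
  have hs : MeasurableSet {ω | Xi ω = 1} := hm (measurableSet_singleton 1)
  have hint : Integrable ({ω | Xi ω = 1}.indicator (fun _ => f 1 - f 0)) μ :=
    (integrable_const _).indicator hs
  calc ∫ ω, f (Xi ω) ∂μ
      = ∫ ω, ({ω | Xi ω = 1}.indicator (fun _ => f 1 - f 0) ω + f 0) ∂μ := by
        rw [bern_repr' hv f]
    _ = (∫ ω, {ω | Xi ω = 1}.indicator (fun _ => f 1 - f 0) ω ∂μ) + ∫ _, f 0 ∂μ :=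
        integral_add hint (integrable_const _)
    _ = (μ {ω | Xi ω = 1}).toReal * f 1 + (1 - (μ {ω | Xi ω = 1}).toReal) * f 0 := by
        rw [integral_indicator_const _ hs, integral_const]
        simp [smul_eq_mul]
        simp only [Measure.real]
        ring
end bernhelp

/-- Bernstein-type bound for a weighted sum of independent Bernoulli variables:
with probability at least `1 - δ`,
`Sₙ ≤ (2 log(1/δ) / F⁻¹(2Ω log(1/δ))) ‖w‖_∞`, where `Ω = ‖w‖_∞² / ∑ pᵢ wᵢ²` and
`F(x) = x² eˣ`; the inverse `F⁻¹` is expressed via `y` satisfying `F y = 2Ω log(1/δ)`. -/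
theorem stmt_8 {Ω : Type*} [MeasurableSpace Ω] (μ : Measure Ω) [IsProbabilityMeasure μ]
    {n : ℕ} (hn : 0 < n) (X : Fin n → Ω → ℝ) (p : Fin n → ℝ) (w : Fin n → ℝ)
    (hmeas : ∀ i, Measurable (X i))
    (hind : iIndepFun X μ)
    (hval : ∀ i ω, X i ω = 0 ∨ X i ω = 1)
    (hp01 : ∀ i, p i ∈ Set.Icc (0 : ℝ) 1)
    (hpX : ∀ i, (μ {ω | X i ω = 1}).toReal = p i)
    (hpos : 0 < ∑ i, p i * w i ^ 2)
    (δ : ℝ) (hδ : δ ∈ Set.Ioo (0 : ℝ) 1)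
    (y : ℝ) (hy : 0 < y)
    (hFy : y ^ 2 * Real.exp y
      = 2 * ((⨆ i, |w i|) ^ 2 / ∑ i, p i * w i ^ 2) * Real.log (1 / δ)) :
    ENNReal.ofReal (1 - δ) ≤
      μ {ω | ∑ i, w i * (X i ω - p i) ≤ 2 * Real.log (1 / δ) / y * (⨆ i, |w i|)} := by
  have : Nonempty (Fin n) := ⟨⟨0, hn⟩⟩
  set M : ℝ := ⨆ i, |w i| with hMdef
  set L : ℝ := Real.log (1 / δ) with hLdef
  have hL : 0 < L := Real.log_pos (one_lt_one_div hδ.1 hδ.2)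
  have hwM : ∀ i, |w i| ≤ M := fun i =>
    le_ciSup (f := fun i => |w i|) (Set.Finite.bddAbove (Set.finite_range _)) i
  have hM : 0 < M := by
    obtain ⟨i, hi⟩ : ∃ i, 0 < p i * w i ^ 2 := by
      by_contra hc
      push_neg at hc
      exact absurd (Finset.sum_nonpos fun i _ => hc i) (not_le.2 hpos)
    have hwi : w i ≠ 0 := by
      intro h0
      rw [h0] at hi; simp at hi
    exact lt_of_lt_of_le (abs_pos.2 hwi) (hwM i)
  set Sp : ℝ := ∑ i, p i * w i ^ 2 with hSpdef
  set lam : ℝ := y / M with hlamdef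
  have hlam : 0 < lam := div_pos hy hM
  set Y : Fin n → Ω → ℝ := fun i ω => w i * (X i ω - p i) with hYdef
  have hYmeas : ∀ i, Measurable (Y i) := fun i =>
    ((hmeas i).sub_const (p i)).const_mul (w i)
  have hindY : iIndepFun Y μ :=
    hind.comp (fun i x => w i * (x - p i))
      (fun i => (measurable_id.sub_const _).const_mul _)
  -- integrability of exp(lam * Y i)
  have hYint : ∀ i, Integrable (fun ω => Real.exp (lam * Y i ω)) μ := fun i =>
    bern_integrable' μ (hmeas i) (hval i) (fun x => Real.exp (lam * (w i * (x - p i))))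
  -- mgf bound per coordinate
  have hmgf : ∀ i, mgf (Y i) μ lam ≤ Real.exp (lam ^ 2 / 2 * Real.exp y * (p i * w i ^ 2)) := by
    intro i
    have hint := bern_integral' μ (hmeas i) (hval i)
      (fun x => Real.exp (lam * (w i * (x - p i))))
    rw [hpX i] at hint
    have hpi := hp01 i
    set a : ℝ := lam * w i with hadef
    have hmgf_eq : mgf (Y i) μ lam
        = p i * Real.exp (a * (1 - p i)) + (1 - p i) * Real.exp (a * (0 - p i)) := by
      rw [mgf]
      rw [hint]
      rw [hadef]
      ring_nf
    have hay : |a| ≤ y := by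
      rw [hadef, abs_mul, abs_of_pos hlam]
      calc lam * |w i| ≤ lam * M := by gcongr; exact hwM i
        _ = y := by rw [hlamdef, div_mul_cancel₀ y hM.ne']
    have step1 : p i * Real.exp (a * (1 - p i)) + (1 - p i) * Real.exp (a * (0 - p i))
        ≤ Real.exp (p i * (Real.exp a - 1 - a)) := by
      have h1 : p i * Real.exp (a * (1 - p i)) + (1 - p i) * Real.exp (a * (0 - p i))
          = Real.exp (-(a * p i)) * (1 + p i * (Real.exp a - 1)) := by
        rw [show a * (1 - p i) = a + -(a * p i) by ring, show a * (0 - p i) = -(a * p i) by ring,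
          Real.exp_add]
        ring
      rw [h1, show p i * (Real.exp a - 1 - a) = p i * (Real.exp a - 1) + -(a * p i) by ring,
        Real.exp_add]
      have h2 : 1 + p i * (Real.exp a - 1) ≤ Real.exp (p i * (Real.exp a - 1)) := by
        have := Real.add_one_le_exp (p i * (Real.exp a - 1))
        linarith
      calc Real.exp (-(a * p i)) * (1 + p i * (Real.exp a - 1))
          ≤ Real.exp (-(a * p i)) * Real.exp (p i * (Real.exp a - 1)) := by
            apply mul_le_mul_of_nonneg_left h2 (Real.exp_pos _).le
        _ = Real.exp (p i * (Real.exp a - 1)) * Real.exp (-(a * p i)) := by ring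
    have step2 : p i * (Real.exp a - 1 - a) ≤ lam ^ 2 / 2 * Real.exp y * (p i * w i ^ 2) := by
      have hq := exp_quad_bound' hay
      have : p i * (Real.exp a - 1 - a) ≤ p i * (a ^ 2 / 2 * Real.exp y) :=
        mul_le_mul_of_nonneg_left hq hpi.1
      calc p i * (Real.exp a - 1 - a) ≤ p i * (a ^ 2 / 2 * Real.exp y) := this
        _ = lam ^ 2 / 2 * Real.exp y * (p i * w i ^ 2) := by rw [hadef]; ring
    calc mgf (Y i) μ lam
        = p i * Real.exp (a * (1 - p i)) + (1 - p i) * Real.exp (a * (0 - p i)) := hmgf_eq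
      _ ≤ Real.exp (p i * (Real.exp a - 1 - a)) := step1
      _ ≤ Real.exp (lam ^ 2 / 2 * Real.exp y * (p i * w i ^ 2)) := Real.exp_le_exp.2 step2
  -- mgf of the sum
  have hmgf_sum : mgf (∑ i, Y i) μ lam ≤ Real.exp L := by
    rw [hindY.mgf_sum hYmeas]
    calc (∏ i, mgf (Y i) μ lam)
        ≤ ∏ i, Real.exp (lam ^ 2 / 2 * Real.exp y * (p i * w i ^ 2)) :=
          Finset.prod_le_prod (fun i _ => mgf_nonneg) (fun i _ => hmgf i)
      _ = Real.exp (∑ i, lam ^ 2 / 2 * Real.exp y * (p i * w i ^ 2)) := by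
          rw [Real.exp_sum]
      _ = Real.exp L := by
          congr 1
          rw [← Finset.mul_sum, ← hSpdef]
          have hSpne : Sp ≠ 0 := ne_of_gt hpos
          have hMne : M ≠ 0 := ne_of_gt hM
          rw [hlamdef]
          field_simp
          field_simp at hFy
          nlinarith [hFy]
  -- Chernoff
  set t' : ℝ := 2 * L / y * M with ht'def
  have hchern := measure_ge_le_exp_mul_mgf (X := ∑ i, Y i) (μ := μ) t' hlam.le
    (hindY.integrable_exp_mul_sum hYmeas (fun i _ => hYint i))
  have hlt : Real.exp (-lam * t') * mgf (∑ i, Y i) μ lam ≤ δ := by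
    have h1 : -lam * t' = -(2 * L) := by
      rw [hlamdef, ht'def]
      field_simp
    rw [h1]
    calc Real.exp (-(2 * L)) * mgf (∑ i, Y i) μ lam
        ≤ Real.exp (-(2 * L)) * Real.exp L := by
          apply mul_le_mul_of_nonneg_left hmgf_sum (Real.exp_pos _).le
      _ = Real.exp (-L) := by rw [← Real.exp_add]; ring_nf
      _ = δ := by
          rw [hLdef, Real.exp_neg, Real.exp_log (by have := hδ.1; positivity), one_div, inv_inv]
  have htail : μ {ω | t' ≤ (∑ i, Y i) ω} ≤ ENNReal.ofReal δ := by
    rw [← ENNReal.ofReal_toReal (measure_ne_top μ _)]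
    exact ENNReal.ofReal_le_ofReal (hchern.trans hlt)
  -- conclude
  have hSmeas : Measurable (fun ω => ∑ i, w i * (X i ω - p i)) :=
    Finset.measurable_sum _ (fun i _ => hYmeas i)
  have hAset : MeasurableSet {ω | ∑ i, w i * (X i ω - p i) ≤ t'} :=
    measurableSet_le hSmeas measurable_const
  have hcompl : {ω | ∑ i, w i * (X i ω - p i) ≤ t'}ᶜ ⊆ {ω | t' ≤ (∑ i, Y i) ω} := by
    intro ω hω
    simp only [Set.mem_compl_iff, Set.mem_setOf_eq, not_le] at hω
    simp only [Set.mem_setOf_eq, Finset.sum_apply]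
    exact le_of_lt hω
  have hgoal : μ {ω | ∑ i, w i * (X i ω - p i) ≤ t'} = 1 - μ {ω | ∑ i, w i * (X i ω - p i) ≤ t'}ᶜ := by
    have h := prob_compl_eq_one_sub (μ := μ) hAset.compl
    rwa [compl_compl] at h
  rw [hgoal]
  have h2 : μ {ω | ∑ i, w i * (X i ω - p i) ≤ t'}ᶜ ≤ ENNReal.ofReal δ :=
    (measure_mono hcompl).trans htail
  calc ENNReal.ofReal (1 - δ) = 1 - ENNReal.ofReal δ := by
        rw [ENNReal.ofReal_sub 1 hδ.1.le, ENNReal.ofReal_one]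
    _ ≤ 1 - μ {ω | ∑ i, w i * (X i ω - p i) ≤ t'}ᶜ := by
        exact tsub_le_tsub_left h2 1
end

section
/- Let $\lambda^*_{s+r} > \lambda^*_{s+r+1}$ (with convention $\lambda_0^* = \infty$) be a decreasing sequence of positive eigenvalues indexed by $t = s+r, \dots, s+1$, with gaps $g_t^* = \lambda_t^* - \max\{\lambda_{t+1}^*, 0\}$. Define recursively $t_0 = s+r$ and $t_\ell = \max\{s < t < t_{\ell-1} : g_t^* > 2 g_{t_{\ell-1}}^*,\ \lambda_t^* > 2\lambda_{t_{\ell-1}}^*\}$, stopping at $B = \min\{\ell : t_\ell \text{ does not exist}\}$ with $t_B = s$. Then $B \le \min\{r, 1 + \log_2 \kappa^*\}$ where $\kappa^* = \lambda_{s+1}^*/\lambda_{s+r}^*$, and each block $S_j = \{t_{j-1}, \dots, t_j + 1\}$ has condition number $\kappa_j^* = \lambda_{t_j+1}^*/\lambda_{t_{j-1}}^* \le 2|S_j|$. -/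
/-- Properties of the pre-conditioned eigen-partition for positive eigenvalues:
the number of blocks satisfies `B ≤ min{r, 1 + log₂ κ*}` and each block has
condition number `κⱼ* ≤ 2|Sⱼ|`. -/
theorem stmt_11 (s r : ℕ) (hr : 0 < r) (lam : ℕ → ℝ)
    (hpos : ∀ u, s + 1 ≤ u → u ≤ s + r → 0 < lam u)
    (hmono : ∀ u v, s + 1 ≤ u → u ≤ v → v ≤ s + r + 1 → lam v ≤ lam u)
    (g : ℕ → ℝ) (hg : ∀ u, g u = lam u - max (lam (u + 1)) 0)
    (B : ℕ) (hB : 0 < B) (t : ℕ → ℕ)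
    (ht0 : t 0 = s + r) (htB : t B = s)
    (hrec : ∀ ℓ, 1 ≤ ℓ → ℓ < B →
      (s < t ℓ ∧ t ℓ < t (ℓ - 1) ∧
        g (t ℓ) > 2 * g (t (ℓ - 1)) ∧ lam (t ℓ) > 2 * lam (t (ℓ - 1))) ∧
      (∀ u, s < u → u < t (ℓ - 1) →
        g u > 2 * g (t (ℓ - 1)) → lam u > 2 * lam (t (ℓ - 1)) → u ≤ t ℓ))
    (hstop : ∀ u, s < u → u < t (B - 1) →
      ¬(g u > 2 * g (t (B - 1)) ∧ lam u > 2 * lam (t (B - 1)))) :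
    (B ≤ r ∧ (B : ℝ) ≤ 1 + Real.logb 2 (lam (s + 1) / lam (s + r))) ∧
    (∀ j, 1 ≤ j → j ≤ B →
      lam (t j + 1) / lam (t (j - 1)) ≤ 2 * ((t (j - 1) : ℝ) - (t j : ℝ))) := by
  have hsr : s + 1 ≤ s + r := by omega
  have hgt : ∀ ℓ, ℓ < B → s < t ℓ := by
    intro ℓ hℓ
    rcases Nat.eq_zero_or_pos ℓ with h0 | h1
    · subst h0; rw [ht0]; omega
    · exact (hrec ℓ h1 hℓ).1.1
  have hdec : ∀ ℓ, 1 ≤ ℓ → ℓ ≤ B → t ℓ < t (ℓ - 1) := by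
    intro ℓ h1 h2
    rcases lt_or_eq_of_le h2 with h | h
    · exact (hrec ℓ h1 h).1.2.1
    · rw [h, htB]; exact hgt (B - 1) (by omega)
  have hub : ∀ ℓ, ℓ ≤ B → t ℓ + ℓ ≤ s + r := by
    intro ℓ
    induction ℓ with
    | zero => intro _; simp [ht0]
    | succ n ih =>
      intro h
      have hd := hdec (n + 1) (by omega) h
      rw [Nat.add_sub_cancel] at hd
      have := ih (by omega)
      omega
  have hBr : B ≤ r := by have := hub B le_rfl; rw [htB] at this; omega
  have hpow : ∀ ℓ, ℓ < B → (2 : ℝ) ^ ℓ * lam (s + r) ≤ lam (t ℓ) := by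
    intro ℓ
    induction ℓ with
    | zero => intro _; rw [ht0]; norm_num
    | succ n ih =>
      intro h
      have h1 := ih (by omega)
      have h2 := (hrec (n + 1) (by omega) h).1.2.2.2
      rw [Nat.add_sub_cancel] at h2
      calc (2 : ℝ) ^ (n + 1) * lam (s + r) = 2 * ((2 : ℝ) ^ n * lam (s + r)) := by ring
        _ ≤ 2 * lam (t n) := by linarith
        _ ≤ lam (t (n + 1)) := le_of_lt h2
  have hpos_sr : 0 < lam (s + r) := hpos _ hsr le_rfl
  have hpos_s1 : 0 < lam (s + 1) := hpos _ le_rfl hsr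
  have hkey : (2 : ℝ) ^ (B - 1) * lam (s + r) ≤ lam (s + 1) := by
    have h1 := hpow (B - 1) (by omega)
    have h2 : lam (t (B - 1)) ≤ lam (s + 1) :=
      hmono (s + 1) (t (B - 1)) le_rfl (hgt (B - 1) (by omega))
        (by have := hub (B - 1) (by omega); omega)
    linarith
  have hlog : (B : ℝ) ≤ 1 + Real.logb 2 (lam (s + 1) / lam (s + r)) := by
    have hdiv : (2 : ℝ) ^ (B - 1) ≤ lam (s + 1) / lam (s + r) :=
      (le_div_iff₀ hpos_sr).2 hkey
    have h2 : Real.logb 2 ((2 : ℝ) ^ (B - 1)) ≤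
        Real.logb 2 (lam (s + 1) / lam (s + r)) :=
      Real.logb_le_logb_of_le (by norm_num) (by positivity) hdiv
    rw [Real.logb_pow, Real.logb_self_eq_one (by norm_num)] at h2
    have hc : ((B - 1 : ℕ) : ℝ) = (B : ℝ) - 1 := by
      rw [Nat.cast_sub hB]; norm_num
    rw [hc] at h2
    linarith
  refine ⟨⟨hBr, hlog⟩, ?_⟩
  intro j hj1 hjB
  have hab : t j < t (j - 1) := hdec j hj1 hjB
  have hsb : s < t (j - 1) := hgt (j - 1) (by omega)
  have hbsr : t (j - 1) ≤ s + r := by have := hub (j - 1) (by omega); omega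
  have has : s ≤ t j := by
    rcases lt_or_eq_of_le hjB with h | h
    · exact le_of_lt (hgt j h)
    · rw [h, htB]
  have hlamb : 0 < lam (t (j - 1)) := hpos _ hsb hbsr
  have hmaxb : max (lam (t (j - 1) + 1)) 0 ≤ lam (t (j - 1)) :=
    max_le (hmono (t (j - 1)) (t (j - 1) + 1) hsb (by omega) (by omega)) hlamb.le
  have hgb_nonneg : 0 ≤ g (t (j - 1)) := by rw [hg]; linarith
  have hgb_le : g (t (j - 1)) ≤ lam (t (j - 1)) := by
    rw [hg]; have := le_max_right (lam (t (j - 1) + 1)) (0 : ℝ); linarith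
  have hdich : ∀ u, t j < u → u < t (j - 1) →
      g u ≤ 2 * g (t (j - 1)) ∨ lam u ≤ 2 * lam (t (j - 1)) := by
    intro u hu1 hu2
    by_contra hcon
    push_neg at hcon
    obtain ⟨hg1, hg2⟩ := hcon
    rcases lt_or_eq_of_le hjB with h | h
    · have := (hrec j hj1 h).2 u (by omega) hu2 hg1 hg2
      omega
    · subst h
      exact hstop u (by omega) hu2 ⟨hg1, hg2⟩
  have haux : ∀ k, k ≤ t (j - 1) - (t j + 1) →
      lam (t (j - 1) - k) ≤ 2 * (k : ℝ) * g (t (j - 1)) + 2 * lam (t (j - 1)) := by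
    intro k
    induction k with
    | zero => intro _; norm_num; linarith
    | succ n ih =>
      intro hk
      have hm1 : t j + 1 ≤ t (j - 1) - (n + 1) := by omega
      have hm2 : t (j - 1) - (n + 1) < t (j - 1) := by omega
      have hplus : t (j - 1) - n = (t (j - 1) - (n + 1)) + 1 := by omega
      have hih := ih (by omega)
      rw [hplus] at hih
      have hlam1 : 0 < lam ((t (j - 1) - (n + 1)) + 1) :=
        hpos _ (by omega) (by omega)
      have hgm : g (t (j - 1) - (n + 1)) =
          lam (t (j - 1) - (n + 1)) - lam ((t (j - 1) - (n + 1)) + 1) := by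
        rw [hg, max_eq_left hlam1.le]
      rcases hdich (t (j - 1) - (n + 1)) (by omega) hm2 with hc | hc
      · push_cast
        have : lam (t (j - 1) - (n + 1)) =
            g (t (j - 1) - (n + 1)) + lam ((t (j - 1) - (n + 1)) + 1) := by
          rw [hgm]; ring
        push_cast at hih
        linarith
      · push_cast
        have hn0 : (0 : ℝ) ≤ 2 * ((n : ℝ) + 1) * g (t (j - 1)) := by positivity
        linarith
  have hfin := haux (t (j - 1) - (t j + 1)) le_rfl
  have he : t (j - 1) - (t (j - 1) - (t j + 1)) = t j + 1 := by omega
  rw [he] at hfin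
  have hc : ((t (j - 1) - (t j + 1) : ℕ) : ℝ) = (t (j - 1) : ℝ) - (t j : ℝ) - 1 := by
    rw [Nat.cast_sub hab]; push_cast; ring
  rw [hc] at hfin
  have hcast : (t j : ℝ) + 1 ≤ (t (j - 1) : ℝ) := by exact_mod_cast hab
  have hprod : 2 * ((t (j - 1) : ℝ) - (t j : ℝ) - 1) * g (t (j - 1)) ≤
      2 * ((t (j - 1) : ℝ) - (t j : ℝ) - 1) * lam (t (j - 1)) :=
    mul_le_mul_of_nonneg_left hgb_le (by linarith)
  rw [div_le_iff₀ hlamb]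
  nlinarith [hfin, hprod]
end

section
/- Let $A$ be a real symmetric $n\times n$ matrix with entries in $[0,1]$, and let $u_1$ be a unit eigenvector of $A$ corresponding to its largest eigenvalue in absolute value. For $i < j$, let $A^{(ij)}$ be $A$ with its $(i,j)$ and $(j,i)$ entries replaced by a value $A'_{ij} \in [0,1]$ (keeping symmetry). Then $\|A\|_{\mathrm{op}} - \|A^{(ij)}\|_{\mathrm{op}} \le 2|u_{1i}||u_{1j}||A_{ij} - A'_{ij}|$. -/
open Matrix

/-- The spectral (ℓ²-operator) norm of a square real matrix. -/
noncomputable def opNorm {n : ℕ} (M : Matrix (Fin n) (Fin n) ℝ) : ℝ :=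
  ‖Matrix.toEuclideanCLM (𝕜 := ℝ) M‖

/-- Quadratic form bound by the operator norm. -/
lemma quad_le_opNorm {n : ℕ} (M : Matrix (Fin n) (Fin n) ℝ) (u : Fin n → ℝ) :
    |∑ k, u k * M.mulVec u k| ≤ ‖Matrix.toEuclideanCLM (𝕜 := ℝ) M‖ * (∑ k, u k ^ 2) := by
  set v : EuclideanSpace ℝ (Fin n) := (WithLp.equiv _ _).symm u with hv
  have h1 : (inner ℝ v (Matrix.toEuclideanCLM (𝕜 := ℝ) M v) : ℝ) = ∑ k, u k * M.mulVec u k := by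
    rw [hv, WithLp.equiv_symm_apply, Matrix.toEuclideanCLM_toLp]
    simp [PiLp.inner_apply, hv, mul_comm]
  have h2 : ‖v‖ ^ 2 = ∑ k, u k ^ 2 := by
    rw [EuclideanSpace.norm_eq, Real.sq_sqrt (by positivity)]
    simp [hv, sq_abs]
  calc |∑ k, u k * M.mulVec u k|
      = |(inner ℝ v (Matrix.toEuclideanCLM (𝕜 := ℝ) M v) : ℝ)| := by rw [h1]
    _ ≤ ‖v‖ * ‖Matrix.toEuclideanCLM (𝕜 := ℝ) M v‖ := abs_real_inner_le_norm _ _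
    _ ≤ ‖v‖ * (‖Matrix.toEuclideanCLM (𝕜 := ℝ) M‖ * ‖v‖) := by
        gcongr; exact (Matrix.toEuclideanCLM (𝕜 := ℝ) M).le_opNorm v
    _ = ‖Matrix.toEuclideanCLM (𝕜 := ℝ) M‖ * (∑ k, u k ^ 2) := by rw [← h2]; ring

/-- One-entry (symmetric) perturbation bound for the spectral norm:
if `A'` agrees with `A` except at entries `(i,j)` and `(j,i)` and `u₁` is a unit
eigenvector of `A` for its largest-in-absolute-value eigenvalue, then
`‖A‖ - ‖A'‖ ≤ 2|u₁ᵢ||u₁ⱼ||Aᵢⱼ - A'ᵢⱼ|`. -/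
theorem stmt_15 {n : ℕ} (A A' : Matrix (Fin n) (Fin n) ℝ)
    (hA : A.IsSymm) (hA' : A'.IsSymm)
    (hAent : ∀ k l, A k l ∈ Set.Icc (0 : ℝ) 1)
    (hA'ent : ∀ k l, A' k l ∈ Set.Icc (0 : ℝ) 1)
    (i j : Fin n) (hij : i < j)
    (hsame : ∀ k l, ¬((k = i ∧ l = j) ∨ (k = j ∧ l = i)) → A' k l = A k l)
    (u1 : Fin n → ℝ) (hu : ∑ k, u1 k ^ 2 = 1)
    (lam : ℝ) (hlam : |lam| = opNorm A) (heig : A.mulVec u1 = lam • u1) :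
    opNorm A - opNorm A' ≤ 2 * |u1 i| * |u1 j| * |A i j - A' i j| := by
  have hAji : A j i = A i j := hA.apply i j
  have hA'ji : A' j i = A' i j := hA'.apply i j
  set SA := ∑ k, u1 k * A.mulVec u1 k with hSA
  set SA' := ∑ k, u1 k * A'.mulVec u1 k with hSA'
  have hSAlam : SA = lam := by
    rw [hSA, heig]
    simp only [Pi.smul_apply, smul_eq_mul]
    rw [show ∑ k, u1 k * (lam * u1 k) = lam * ∑ k, u1 k ^ 2 by
      rw [Finset.mul_sum]; exact Finset.sum_congr rfl fun k _ => by ring]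
    rw [hu, mul_one]
  have h1 : opNorm A = |SA| := by rw [hSAlam, hlam]
  have h2 : |SA'| ≤ opNorm A' := by
    have := quad_le_opNorm A' u1
    rwa [hu, mul_one] at this
  have key : SA - SA' = u1 i * ((A i j - A' i j) * u1 j) + u1 j * ((A i j - A' i j) * u1 i) := by
    rw [hSA, hSA', ← Finset.sum_sub_distrib]
    simp only [mulVec, dotProduct]
    have step : ∀ k, u1 k * (∑ l, A k l * u1 l) - u1 k * (∑ l, A' k l * u1 l)
        = ∑ l, u1 k * ((A k l - A' k l) * u1 l) := by
      intro k
      rw [Finset.mul_sum, Finset.mul_sum, ← Finset.sum_sub_distrib]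
      exact Finset.sum_congr rfl fun l _ => by ring
    rw [Finset.sum_congr rfl fun k _ => step k]
    have hne : i ≠ j := hij.ne
    have hg : ∀ k l, u1 k * ((A k l - A' k l) * u1 l)
        = (if k = i ∧ l = j then u1 i * ((A i j - A' i j) * u1 j) else 0)
          + (if k = j ∧ l = i then u1 j * ((A j i - A' j i) * u1 i) else 0) := by
      intro k l
      by_cases h1 : k = i ∧ l = j
      · obtain ⟨rfl, rfl⟩ := h1
        simp [hne]
      · by_cases h2 : k = j ∧ l = i
        · obtain ⟨rfl, rfl⟩ := h2
          simp [h1, hne]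
        · rw [hsame k l (by tauto)]
          simp [h1, h2]
    rw [Finset.sum_congr rfl fun k _ => Finset.sum_congr rfl fun l _ => hg k l]
    simp [Finset.sum_add_distrib, ite_and, hAji, hA'ji]
  calc opNorm A - opNorm A' ≤ |SA| - |SA'| := by rw [h1]; linarith
    _ ≤ |SA - SA'| := abs_sub_abs_le_abs_sub _ _
    _ = |u1 i * ((A i j - A' i j) * u1 j) + u1 j * ((A i j - A' i j) * u1 i)| := by rw [key]
    _ = |2 * (u1 i * (u1 j * (A i j - A' i j)))| := by ring_nf
    _ = 2 * |u1 i| * |u1 j| * |A i j - A' i j| := by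
        rw [abs_mul, abs_mul, abs_mul, abs_two]; ring
end

section
/- Let $U, U^* \in \mathbb{R}^{n\times r}$ have orthonormal columns and let $O \in \mathbb{R}^{r\times r}$ be orthogonal. Then $\|UU^T - U^*(U^*)^T\|_{2\to\infty} \le (\sqrt{n}\|U^*\|_{2\to\infty} + 1)\|UO - U^*\|_{2\to\infty}$, where $\|M\|_{2\to\infty} = \max_k \|M_k\|_2$ is the maximum row $\ell_2$ norm. -/
open Matrix

/-- The two-to-infinity norm: the maximum ℓ² norm of a row. -/
noncomputable def twoToInfNorm {n r : ℕ} (M : Matrix (Fin n) (Fin r) ℝ) : ℝ :=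
  ⨆ k, Real.sqrt (∑ j, M k j ^ 2)

private lemma sqrt_sum_sq_add_le {m : ℕ} (f g : Fin m → ℝ) :
    Real.sqrt (∑ j, (f j + g j) ^ 2) ≤
      Real.sqrt (∑ j, f j ^ 2) + Real.sqrt (∑ j, g j ^ 2) := by
  have hn : ∀ h : Fin m → ℝ,
      Real.sqrt (∑ j, h j ^ 2) = ‖(WithLp.equiv 2 (Fin m → ℝ)).symm h‖ := by
    intro h
    rw [EuclideanSpace.norm_eq]
    simp [Real.norm_eq_abs, sq_abs]
  have := norm_add_le ((WithLp.equiv 2 (Fin m → ℝ)).symm f)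
    ((WithLp.equiv 2 (Fin m → ℝ)).symm g)
  rw [hn f, hn g, hn (fun j => f j + g j)]
  rw [show (WithLp.equiv 2 (Fin m → ℝ)).symm (fun j => f j + g j) =
      (WithLp.equiv 2 (Fin m → ℝ)).symm f + (WithLp.equiv 2 (Fin m → ℝ)).symm g from rfl]
  exact this

private lemma rn_le_tt {n r : ℕ} (M : Matrix (Fin n) (Fin r) ℝ) (k : Fin n) :
    Real.sqrt (∑ j, M k j ^ 2) ≤ twoToInfNorm M := by
  unfold twoToInfNorm
  exact le_ciSup (f := fun k => Real.sqrt (∑ j, M k j ^ 2)) (Finite.bddAbove_range _) k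

private lemma tt_nonneg {n r : ℕ} (M : Matrix (Fin n) (Fin r) ℝ) :
    0 ≤ twoToInfNorm M :=
  Real.iSup_nonneg fun _ => Real.sqrt_nonneg _

/-- For `U, U*` with orthonormal columns and `O` orthogonal,
`‖UUᵀ - U*(U*)ᵀ‖_{2→∞} ≤ (√n ‖U*‖_{2→∞} + 1) ‖UO - U*‖_{2→∞}`. -/
theorem stmt_19 {n r : ℕ} (U Ustar : Matrix (Fin n) (Fin r) ℝ)
    (O : Matrix (Fin r) (Fin r) ℝ)
    (hU : Uᵀ * U = 1) (hUstar : Ustarᵀ * Ustar = 1)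
    (hO : Oᵀ * O = 1) (hO' : O * Oᵀ = 1) :
    twoToInfNorm (U * Uᵀ - Ustar * Ustarᵀ) ≤
      (Real.sqrt n * twoToInfNorm Ustar + 1) * twoToInfNorm (U * O - Ustar) := by
  set D : Matrix (Fin n) (Fin r) ℝ := U * O - Ustar with hDdef
  set V : Matrix (Fin n) (Fin r) ℝ := U * O with hVdef
  have hV : Vᵀ * V = 1 := by
    rw [hVdef, Matrix.transpose_mul, Matrix.mul_assoc, ← Matrix.mul_assoc Uᵀ, hU,
      Matrix.one_mul, hO]
  -- the key algebraic decomposition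
  have h1 : U * O * (Oᵀ * Uᵀ) = U * Uᵀ := by
    rw [Matrix.mul_assoc U O, ← Matrix.mul_assoc O, hO', Matrix.one_mul]
  have key : U * Uᵀ - Ustar * Ustarᵀ = D * Vᵀ + Ustar * Dᵀ := by
    rw [hDdef, hVdef, Matrix.transpose_sub, Matrix.transpose_mul, Matrix.sub_mul,
      Matrix.mul_sub, h1]
    abel
  have httD : 0 ≤ twoToInfNorm D := tt_nonneg D
  have httU : 0 ≤ twoToInfNorm Ustar := tt_nonneg Ustar
  have hVorth : ∀ i i', (∑ j, V j i * V j i') = if i = i' then 1 else 0 := by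
    intro i i'
    have := congrFun (congrFun hV i) i'
    simpa [Matrix.mul_apply, Matrix.one_apply, Matrix.transpose_apply] using this
  refine Real.iSup_le ?_
    (mul_nonneg (add_nonneg (mul_nonneg (Real.sqrt_nonneg _) httU) zero_le_one) httD)
  intro k
  -- row-wise bounds
  have hrow : ∀ j, (U * Uᵀ - Ustar * Ustarᵀ) k j = (D * Vᵀ) k j + (Ustar * Dᵀ) k j := by
    intro j; rw [key]; rfl
  have htri : Real.sqrt (∑ j, ((U * Uᵀ - Ustar * Ustarᵀ) k j) ^ 2) ≤
      Real.sqrt (∑ j, ((D * Vᵀ) k j) ^ 2) + Real.sqrt (∑ j, ((Ustar * Dᵀ) k j) ^ 2) := by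
    have := sqrt_sum_sq_add_le (fun j => (D * Vᵀ) k j) (fun j => (Ustar * Dᵀ) k j)
    simpa [hrow] using this
  -- first term: exact identity using orthonormality of V's columns
  have hterm1 : Real.sqrt (∑ j, ((D * Vᵀ) k j) ^ 2) = Real.sqrt (∑ i, D k i ^ 2) := by
    congr 1
    calc ∑ j, ((D * Vᵀ) k j) ^ 2
        = ∑ j, (∑ i, D k i * V j i) * (∑ i', D k i' * V j i') := by
          simp [Matrix.mul_apply, Matrix.transpose_apply, sq]
      _ = ∑ j, ∑ i, ∑ i', (D k i * D k i') * (V j i * V j i') := by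
          refine Finset.sum_congr rfl fun j _ => ?_
          rw [Finset.sum_mul_sum]
          refine Finset.sum_congr rfl fun i _ => Finset.sum_congr rfl fun i' _ => by ring
      _ = ∑ i, ∑ i', (D k i * D k i') * ∑ j, V j i * V j i' := by
          rw [Finset.sum_comm]
          refine Finset.sum_congr rfl fun i _ => ?_
          rw [Finset.sum_comm]
          exact Finset.sum_congr rfl fun i' _ => by rw [← Finset.mul_sum]
      _ = ∑ i, D k i ^ 2 := by
          refine Finset.sum_congr rfl fun i _ => ?_
          simp [hVorth, sq]
  -- second term: Cauchy–Schwarz bound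
  have hterm2 : Real.sqrt (∑ j, ((Ustar * Dᵀ) k j) ^ 2) ≤
      Real.sqrt n * (Real.sqrt (∑ i, Ustar k i ^ 2) * twoToInfNorm D) := by
    have hb : ∑ j, ((Ustar * Dᵀ) k j) ^ 2 ≤
        (n : ℝ) * ((∑ i, Ustar k i ^ 2) * twoToInfNorm D ^ 2) := by
      have hbj : ∀ j : Fin n, ((Ustar * Dᵀ) k j) ^ 2 ≤
          (∑ i, Ustar k i ^ 2) * twoToInfNorm D ^ 2 := by
        intro j
        have hcs : ((Ustar * Dᵀ) k j) ^ 2 ≤ (∑ i, Ustar k i ^ 2) * (∑ i, D j i ^ 2) := by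
          have := Finset.sum_mul_sq_le_sq_mul_sq Finset.univ (fun i => Ustar k i)
            (fun i => D j i)
          simpa [Matrix.mul_apply, Matrix.transpose_apply] using this
        refine hcs.trans ?_
        have hDj : ∑ i, D j i ^ 2 ≤ twoToInfNorm D ^ 2 := by
          have h1 : Real.sqrt (∑ i, D j i ^ 2) ≤ twoToInfNorm D := rn_le_tt D j
          have h2 : ∑ i, D j i ^ 2 = Real.sqrt (∑ i, D j i ^ 2) ^ 2 := by
            rw [Real.sq_sqrt (Finset.sum_nonneg fun _ _ => sq_nonneg _)]
          rw [h2]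
          exact pow_le_pow_left₀ (Real.sqrt_nonneg _) h1 2
        exact mul_le_mul_of_nonneg_left hDj (Finset.sum_nonneg fun _ _ => sq_nonneg _)
      calc ∑ j, ((Ustar * Dᵀ) k j) ^ 2
          ≤ ∑ _j : Fin n, (∑ i, Ustar k i ^ 2) * twoToInfNorm D ^ 2 :=
            Finset.sum_le_sum fun j _ => hbj j
        _ = (n : ℝ) * ((∑ i, Ustar k i ^ 2) * twoToInfNorm D ^ 2) := by
            simp [Finset.sum_const, mul_comm]
    have := Real.sqrt_le_sqrt hb
    refine this.trans (le_of_eq ?_)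
    rw [Real.sqrt_mul (by positivity), Real.sqrt_mul (Finset.sum_nonneg fun _ _ => sq_nonneg _),
      Real.sqrt_sq httD]
  have hU2 : Real.sqrt (∑ i, Ustar k i ^ 2) ≤ twoToInfNorm Ustar := rn_le_tt Ustar k
  have hD2 : Real.sqrt (∑ i, D k i ^ 2) ≤ twoToInfNorm D := rn_le_tt D k
  calc Real.sqrt (∑ j, ((U * Uᵀ - Ustar * Ustarᵀ) k j) ^ 2)
      ≤ Real.sqrt (∑ j, ((D * Vᵀ) k j) ^ 2) + Real.sqrt (∑ j, ((Ustar * Dᵀ) k j) ^ 2) := htri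
    _ ≤ twoToInfNorm D + Real.sqrt n * (twoToInfNorm Ustar * twoToInfNorm D) := by
        apply add_le_add
        · rw [hterm1]; exact hD2
        · refine hterm2.trans ?_
          apply mul_le_mul_of_nonneg_left _ (Real.sqrt_nonneg _)
          exact mul_le_mul_of_nonneg_right hU2 httD
    _ = (Real.sqrt n * twoToInfNorm Ustar + 1) * twoToInfNorm D := by ring
end
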